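/- The function x ↦ e^{−x²}/erfc(x) is strictly monotonically increasing on ℝ. Equivalently, the complementary error function erfc is strictly log-concave on ℝ. -/

import Mathlib

open MeasureTheory Real

noncomputable def erfc (x : ℝ) : ℝ :=
  (2 / Real.sqrt π) * ∫ t in Set.Ioi x, Real.exp (-t ^ 2)

open Set Filter in
private lemma gauss_integrable : Integrable (fun t : ℝ => Real.exp (-t ^ 2)) := by
  simpa using integrable_exp_neg_mul_sq (by norm_num : (0:ℝ) < 1)

private lemma gauss_cont : Continuous (fun t : ℝ => Real.exp (-t ^ 2)) := by
  continuity

open Set in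
private lemma G_pos (x : ℝ) : 0 < ∫ t in Ioi x, Real.exp (-t ^ 2) := by
  rw [setIntegral_pos_iff_support_of_nonneg_ae
    (ae_of_all _ fun t => (Real.exp_pos _).le) gauss_integrable.integrableOn]
  have : Function.support (fun t : ℝ => Real.exp (-t ^ 2)) = Set.univ := by
    ext t; simp [Function.mem_support, (Real.exp_pos _).ne']
  rw [this, Set.univ_inter, Real.volume_Ioi]
  exact ENNReal.zero_lt_top

open Set in
private lemma G_split' {a b : ℝ} (h : a ≤ b) :
    (∫ t in Ioi a, Real.exp (-t ^ 2)) =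
      (∫ t in Ioc a b, Real.exp (-t ^ 2)) + ∫ t in Ioi b, Real.exp (-t ^ 2) := by
  rw [← setIntegral_union (Ioc_disjoint_Ioi le_rfl) measurableSet_Ioi
    gauss_integrable.integrableOn gauss_integrable.integrableOn, Ioc_union_Ioi_eq_Ioi h]

open Set in
private lemma G_split (x : ℝ) :
    (∫ t in Ioi x, Real.exp (-t ^ 2)) =
      (∫ t in Ioi (0:ℝ), Real.exp (-t ^ 2)) - ∫ t in (0:ℝ)..x, Real.exp (-t ^ 2) := by
  rcases le_total 0 x with h | h
  · rw [intervalIntegral.integral_of_le h, G_split' h]; ring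
  · rw [intervalIntegral.integral_of_ge h, G_split' h]; ring

open Set in
private lemma G_hasDeriv (x : ℝ) :
    HasDerivAt (fun u : ℝ => ∫ t in Ioi u, Real.exp (-t ^ 2)) (-Real.exp (-x ^ 2)) x := by
  have h1 : HasDerivAt (fun u : ℝ => ∫ t in (0:ℝ)..u, Real.exp (-t ^ 2))
      (Real.exp (-x ^ 2)) x :=
    intervalIntegral.integral_hasDerivAt_right (gauss_cont.intervalIntegrable _ _)
      (gauss_cont.stronglyMeasurableAtFilter _ _) gauss_cont.continuousAt
  have h2 := (hasDerivAt_const x (∫ t in Ioi (0:ℝ), Real.exp (-t ^ 2))).sub h1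
  rw [zero_sub] at h2
  exact h2.congr_of_eventuallyEq (Filter.Eventually.of_forall fun u => G_split u)

open Set in
private lemma key_ineq {x : ℝ} (hx : 0 < x) :
    2 * x * ∫ t in Ioi x, Real.exp (-t ^ 2) < Real.exp (-x ^ 2) := by
  -- antiderivative for t * exp(-t^2)
  have hderiv : ∀ t ∈ Ioi x, HasDerivAt (fun u : ℝ => -Real.exp (-u ^ 2) / 2)
      (t * Real.exp (-t ^ 2)) t := by
    intro t _
    have h : HasDerivAt (fun u : ℝ => -u ^ 2) (-(2 * t)) t := by
      simpa using ((hasDerivAt_pow 2 t).fun_neg)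
    have := (h.exp.fun_neg.div_const 2)
    refine this.congr_deriv ?_
    ring
  have hnonneg : ∀ t ∈ Ioi x, 0 ≤ t * Real.exp (-t ^ 2) := fun t ht =>
    mul_nonneg (hx.trans ht).le (Real.exp_pos _).le
  have htends : Filter.Tendsto (fun u : ℝ => -Real.exp (-u ^ 2) / 2) Filter.atTop (nhds 0) := by
    have h1 : Filter.Tendsto (fun u : ℝ => -u ^ 2) Filter.atTop Filter.atBot := by
      simpa using (tendsto_pow_atTop (two_ne_zero)).neg_const_mul_atTop (by norm_num : (-1:ℝ) < 0) |>.congr (fun u => by ring)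
    have := (Real.tendsto_exp_atBot.comp h1).neg.div_const 2
    simpa using this
  have hcont : ContinuousWithinAt (fun u : ℝ => -Real.exp (-u ^ 2) / 2) (Ici x) x :=
    (Continuous.continuousWithinAt (by continuity))
  have hInt : IntegrableOn (fun t : ℝ => t * Real.exp (-t ^ 2)) (Ioi x) :=
    integrableOn_Ioi_deriv_of_nonneg hcont hderiv hnonneg htends
  have hval : (∫ t in Ioi x, t * Real.exp (-t ^ 2)) = Real.exp (-x ^ 2) / 2 := by
    rw [integral_Ioi_of_hasDerivAt_of_nonneg hcont hderiv hnonneg htends]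
    ring
  -- strict positivity of the gap
  have hgap : 0 < ∫ t in Ioi x, (t - x) * Real.exp (-t ^ 2) := by
    rw [setIntegral_pos_iff_support_of_nonneg_ae]
    · have hsub : Ioi x ⊆ Function.support fun t : ℝ => (t - x) * Real.exp (-t ^ 2) := by
        intro t ht
        exact (mul_pos (sub_pos.2 ht) (Real.exp_pos _)).ne'
      rw [Set.inter_eq_right.2 hsub, Real.volume_Ioi]
      exact ENNReal.zero_lt_top
    · refine (ae_restrict_iff' measurableSet_Ioi).2 (Filter.Eventually.of_forall fun t ht => ?_)
      exact mul_nonneg (sub_nonneg.2 (le_of_lt ht)) (Real.exp_pos _).le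
    · have : (fun t : ℝ => (t - x) * Real.exp (-t ^ 2)) =
          fun t => t * Real.exp (-t ^ 2) - x * Real.exp (-t ^ 2) := by
        funext t; ring
      rw [this]
      exact hInt.sub (gauss_integrable.integrableOn.const_mul x)
  have hsplit : (∫ t in Ioi x, (t - x) * Real.exp (-t ^ 2)) =
      (∫ t in Ioi x, t * Real.exp (-t ^ 2)) - x * ∫ t in Ioi x, Real.exp (-t ^ 2) := by
    rw [← integral_const_mul, ← integral_sub hInt (gauss_integrable.integrableOn.const_mul x)]
    congr 1; funext t; ring
  rw [hsplit, hval] at hgap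
  linarith

theorem strictMono_exp_neg_sq_div_erfc :
    StrictMono (fun x : ℝ => Real.exp (-x ^ 2) / erfc x) := by
  have hc : 0 < 2 / Real.sqrt π := div_pos two_pos (Real.sqrt_pos.2 Real.pi_pos)
  have herfc_pos : ∀ x, 0 < erfc x := fun x => mul_pos hc (G_pos x)
  apply strictMono_of_hasDerivAt_pos (f' := fun x =>
    ((-(2*x) * Real.exp (-x ^ 2)) * erfc x -
      Real.exp (-x ^ 2) * (2 / Real.sqrt π * -Real.exp (-x ^ 2))) / erfc x ^ 2)
  · intro x
    have h1 : HasDerivAt (fun x : ℝ => Real.exp (-x ^ 2)) (-(2*x) * Real.exp (-x ^ 2)) x := by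
      have h : HasDerivAt (fun u : ℝ => -u ^ 2) (-(2 * x)) x := by
        simpa using (hasDerivAt_pow 2 x).fun_neg
      simpa [mul_comm] using h.exp
    have h2 : HasDerivAt erfc (2 / Real.sqrt π * -Real.exp (-x ^ 2)) x :=
      (G_hasDeriv x).const_mul _
    exact h1.div h2 (herfc_pos x).ne'
  · intro x
    apply div_pos
    · have hG := G_pos x
      have he := Real.exp_pos (-x ^ 2)
      have key : 2 * x * (∫ t in Set.Ioi x, Real.exp (-t ^ 2)) < Real.exp (-x ^ 2) := by
        rcases le_or_gt x 0 with hx | hx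
        · nlinarith
        · exact key_ineq hx
      have heq : ((-(2*x) * Real.exp (-x ^ 2)) * erfc x -
          Real.exp (-x ^ 2) * (2 / Real.sqrt π * -Real.exp (-x ^ 2))) =
          Real.exp (-x ^ 2) * (2 / Real.sqrt π) *
            (Real.exp (-x ^ 2) - 2 * x * ∫ t in Set.Ioi x, Real.exp (-t ^ 2)) := by
        unfold erfc; ring
      rw [heq]
      exact mul_pos (mul_pos he hc) (by linarith)
    · exact pow_pos (herfc_pos x) 2
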